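/- Under the subjective censored-history distribution H(Ψ(μ₁, μ₂; γ); c), the conditional mean of the 'recentered' second draw satisfies E[h₂ + γh₁ | h₂ ≠ ∅] = μ₂ + γμ₁ for every cutoff c ∈ ℝ; whereas under the true distribution H•(c) (with independent draws), E[h₂ + γh₁ | h₂ ≠ ∅] = μ₂• + γ·E[X₁ | X₁ ≤ c]. Consequently the unique (μ₁, μ₂) matching both the first-draw mean and the recentered second-draw mean of H•(c) is μ₁ = μ₁• and μ₂ = μ₂• − γ(μ₁• − E[X₁ | X₁ ≤ c]). -/

import Mathlib

open MeasureTheory Set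

/-- Gaussian density with mean `a` and variance `s2`. -/
noncomputable def gauss (a s2 x : ℝ) : ℝ :=
  (Real.sqrt (2 * Real.pi * s2))⁻¹ * Real.exp (-(x - a) ^ 2 / (2 * s2))

/-- Mean of a `N(a, s2)` random variable truncated above at `c`, i.e. `E[X | X ≤ c]`. -/
noncomputable def truncMean (a s2 c : ℝ) : ℝ :=
  (∫ x in Iic c, x * gauss a s2 x) / (∫ x in Iic c, gauss a s2 x)

/-- `E[h₂ + γh₁ | h₂ ≠ ∅]` under the subjective censored-history distribution
`H(Ψ(μ₁, μ₂; γ); c)`. -/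
noncomputable def recMeanSub (γ s2 c μ1 μ2 : ℝ) : ℝ :=
  (∫ x1 in Iic c, ∫ x2 : ℝ,
      (x2 + γ * x1) * (gauss μ1 s2 x1 * gauss (μ2 - γ * (x1 - μ1)) s2 x2)) /
    ∫ x1 in Iic c, gauss μ1 s2 x1

/-- `E[h₂ + γh₁ | h₂ ≠ ∅]` under the true censored-history distribution `H•(c)`,
where the draws are independent with means `μ1b, μ2b`. -/
noncomputable def recMeanTrue (γ s2 c μ1b μ2b : ℝ) : ℝ :=
  (∫ x1 in Iic c, ∫ x2 : ℝ, (x2 + γ * x1) * (gauss μ1b s2 x1 * gauss μ2b s2 x2)) /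
    ∫ x1 in Iic c, gauss μ1b s2 x1

/-- Mean of the first draw (which is never censored) under the subjective model. -/
noncomputable def firstMean (s2 μ1 : ℝ) : ℝ := ∫ x : ℝ, x * gauss μ1 s2 x

lemma gauss_eq_pdf (a : ℝ) {s2 : ℝ} (hs2 : 0 < s2) :
    gauss a s2 = ProbabilityTheory.gaussianPDFReal a ⟨s2, hs2.le⟩ := by
  funext x
  simp [gauss, ProbabilityTheory.gaussianPDFReal]
  rfl

lemma gauss_pos (a : ℝ) {s2 : ℝ} (hs2 : 0 < s2) (x : ℝ) : 0 < gauss a s2 x := by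
  apply mul_pos _ (Real.exp_pos _)
  rw [inv_pos]
  exact Real.sqrt_pos.2 (by positivity)

lemma integrable_gauss (a : ℝ) {s2 : ℝ} (hs2 : 0 < s2) : Integrable (gauss a s2) := by
  rw [gauss_eq_pdf a hs2]
  exact ProbabilityTheory.integrable_gaussianPDFReal a _

lemma integral_gauss (a : ℝ) {s2 : ℝ} (hs2 : 0 < s2) : ∫ x, gauss a s2 x = 1 := by
  rw [gauss_eq_pdf a hs2]
  exact ProbabilityTheory.integral_gaussianPDFReal_eq_one a
    (by simpa using hs2.ne' : (⟨s2, hs2.le⟩ : NNReal) ≠ 0)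

lemma gauss_shift (a : ℝ) {s2 : ℝ} (x : ℝ) : gauss a s2 (x + a) = gauss 0 s2 x := by
  simp [gauss]

lemma integrable_mul_gauss (a : ℝ) {s2 : ℝ} (hs2 : 0 < s2) :
    Integrable (fun x => x * gauss a s2 x) := by
  have hb : (0 : ℝ) < 1 / (2 * s2) := by positivity
  have key : Integrable (fun x : ℝ => x * Real.exp (-(1 / (2 * s2)) * (x - a) ^ 2)) := by
    have h1 : Integrable (fun y : ℝ => (y + a) * Real.exp (-(1 / (2 * s2)) * y ^ 2)) := by
      have := (integrable_mul_exp_neg_mul_sq hb).add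
        ((integrable_exp_neg_mul_sq hb).const_mul a)
      exact this.congr (ae_of_all _ fun y => by simp only [Pi.add_apply]; ring_nf)
    have := h1.comp_sub_right a
    convert this using 1
    funext x; simp
  have : Integrable (fun x =>
      (Real.sqrt (2 * Real.pi * s2))⁻¹ * (x * Real.exp (-(1 / (2 * s2)) * (x - a) ^ 2))) :=
    key.const_mul _
  convert this using 1
  funext x
  have : -(x - a) ^ 2 / (2 * s2) = -(1 / (2 * s2)) * (x - a) ^ 2 := by field_simp
  rw [gauss, this]; ring

lemma integral_mul_gauss (a : ℝ) {s2 : ℝ} (hs2 : 0 < s2) :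
    ∫ x, x * gauss a s2 x = a := by
  have hshift : ∫ x, x * gauss a s2 x = ∫ x, (x + a) * gauss a s2 (x + a) :=
    (integral_add_right_eq_self (fun x => x * gauss a s2 x) a).symm
  have hzero : ∫ x, x * gauss 0 s2 x = 0 := by
    have hneg : ∫ x, x * gauss 0 s2 x = ∫ x, (-x) * gauss 0 s2 (-x) :=
      (integral_neg_eq_self (fun x => x * gauss 0 s2 x) volume).symm
    have heven : ∀ x, gauss 0 s2 (-x) = gauss 0 s2 x := by intro x; simp [gauss]
    have : ∫ x, (-x) * gauss 0 s2 (-x) = -∫ x, x * gauss 0 s2 x := by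
      rw [← integral_neg]
      congr 1; funext x; rw [heven]; ring
    have h2 := hneg.trans this
    linarith
  rw [hshift]
  have : ∫ x, (x + a) * gauss a s2 (x + a)
      = ∫ x, (x * gauss 0 s2 x + a * gauss 0 s2 x) := by
    congr 1; funext x; rw [gauss_shift]; ring
  rw [this, integral_add (integrable_mul_gauss 0 hs2)
    ((integrable_gauss 0 hs2).const_mul a), hzero, integral_const_mul,
    integral_gauss 0 hs2]
  ring

lemma setIntegral_gauss_pos (a : ℝ) {s2 : ℝ} (hs2 : 0 < s2) (c : ℝ) :
    0 < ∫ x in Iic c, gauss a s2 x := by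
  rw [setIntegral_pos_iff_support_of_nonneg_ae
    (ae_of_all _ fun x => (gauss_pos a hs2 x).le)
    ((integrable_gauss a hs2).integrableOn)]
  have : Function.support (gauss a s2) = Set.univ := by
    ext x; simp [(gauss_pos a hs2 x).ne']
  rw [this, Set.univ_inter]
  simp [Real.volume_Iic]

/-- Inner integral: `∫ x2, (x2 + t) * (K * gauss m s2 x2) = K * (m + t)`. -/
lemma inner_integral (K m t : ℝ) {s2 : ℝ} (hs2 : 0 < s2) :
    ∫ x2 : ℝ, (x2 + t) * (K * gauss m s2 x2) = K * (m + t) := by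
  have : (fun x2 : ℝ => (x2 + t) * (K * gauss m s2 x2))
      = fun x2 => K * (x2 * gauss m s2 x2) + (K * t) * gauss m s2 x2 := by
    funext x2; ring
  rw [this, integral_add (((integrable_mul_gauss m hs2).const_mul K))
    ((integrable_gauss m hs2).const_mul (K * t)), integral_const_mul,
    integral_const_mul, integral_mul_gauss m hs2, integral_gauss m hs2]
  ring

/-- Under the subjective model, `E[h₂ + γh₁ | h₂ ≠ ∅] = μ₂ + γμ₁` for every cutoff `c`;
under the true model it equals `μ₂• + γ·E[X₁ | X₁ ≤ c]`. Consequently the unique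
`(μ₁, μ₂)` matching both the first-draw mean and the recentered second-draw mean of the
true distribution is `μ₁ = μ₁•`, `μ₂ = μ₂• − γ(μ₁• − E[X₁ | X₁ ≤ c])`. -/
theorem recentered_moment_matching (μ1b μ2b s2 γ : ℝ) (hs2 : 0 < s2) (hγ : 0 < γ) :
    (∀ c μ1 μ2 : ℝ, recMeanSub γ s2 c μ1 μ2 = μ2 + γ * μ1) ∧
    (∀ c : ℝ, recMeanTrue γ s2 c μ1b μ2b = μ2b + γ * truncMean μ1b s2 c) ∧
    (∀ c μ1 μ2 : ℝ,
      firstMean s2 μ1 = firstMean s2 μ1b ∧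
        recMeanSub γ s2 c μ1 μ2 = recMeanTrue γ s2 c μ1b μ2b →
      μ1 = μ1b ∧ μ2 = μ2b - γ * (μ1b - truncMean μ1b s2 c)) := by
  have hsub : ∀ c μ1 μ2 : ℝ, recMeanSub γ s2 c μ1 μ2 = μ2 + γ * μ1 := by
    intro c μ1 μ2
    have hI := setIntegral_gauss_pos μ1 hs2 c
    have hnum : (∫ x1 in Iic c, ∫ x2 : ℝ,
        (x2 + γ * x1) * (gauss μ1 s2 x1 * gauss (μ2 - γ * (x1 - μ1)) s2 x2))
        = (μ2 + γ * μ1) * ∫ x1 in Iic c, gauss μ1 s2 x1 := by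
      rw [← integral_const_mul]
      apply setIntegral_congr_fun measurableSet_Iic
      intro x1 _
      dsimp only
      rw [inner_integral (gauss μ1 s2 x1) (μ2 - γ * (x1 - μ1)) (γ * x1) hs2]
      ring
    rw [recMeanSub, hnum, mul_div_assoc, div_self hI.ne', mul_one]
  have htrue : ∀ c : ℝ, recMeanTrue γ s2 c μ1b μ2b = μ2b + γ * truncMean μ1b s2 c := by
    intro c
    have hI := setIntegral_gauss_pos μ1b hs2 c
    have hnum : (∫ x1 in Iic c, ∫ x2 : ℝ,
        (x2 + γ * x1) * (gauss μ1b s2 x1 * gauss μ2b s2 x2))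
        = μ2b * (∫ x1 in Iic c, gauss μ1b s2 x1)
          + γ * ∫ x1 in Iic c, x1 * gauss μ1b s2 x1 := by
      have step : (∫ x1 in Iic c, ∫ x2 : ℝ,
          (x2 + γ * x1) * (gauss μ1b s2 x1 * gauss μ2b s2 x2))
          = ∫ x1 in Iic c,
              (μ2b * gauss μ1b s2 x1 + γ * (x1 * gauss μ1b s2 x1)) := by
        apply setIntegral_congr_fun measurableSet_Iic
        intro x1 _
        dsimp only
        rw [inner_integral (gauss μ1b s2 x1) μ2b (γ * x1) hs2]
        ring
      rw [step, integral_add (((integrable_gauss μ1b hs2).const_mul μ2b).integrableOn)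
        (((integrable_mul_gauss μ1b hs2).const_mul γ).integrableOn),
        integral_const_mul, integral_const_mul]
    rw [recMeanTrue, hnum, truncMean]
    field_simp
  refine ⟨hsub, htrue, ?_⟩
  intro c μ1 μ2 ⟨h1, h2⟩
  have hfm : ∀ a : ℝ, firstMean s2 a = a := fun a => integral_mul_gauss a hs2
  have hμ1 : μ1 = μ1b := by rw [← hfm μ1, ← hfm μ1b, h1]
  refine ⟨hμ1, ?_⟩
  rw [hsub, htrue] at h2
  rw [hμ1] at h2
  linarith
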